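/- For every connection ω on P and every tensorial form φ∈τ(P), the covariant derivative satisfies D_ωφ=dφ−(−1)^{∂φ}[φ,ω], where D_ωφ denotes the composition of φ with D_ω. -/
import Mathlib


open TensorProduct

noncomputable section

structure GrStarAlg (Ω : Type) [Ring Ω] [Algebra ℂ Ω] where
  gr : ℕ → Submodule ℂ Ω
  direct : DirectSum.IsInternal gr
  proj : ℕ → Ω →ₗ[ℂ] Ω
  proj_mem : ∀ (n : ℕ) (x : Ω), proj n x ∈ gr n
  proj_of_mem : ∀ {n : ℕ} {x : Ω}, x ∈ gr n → proj n x = x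
  proj_of_ne : ∀ {m n : ℕ} {x : Ω}, x ∈ gr n → m ≠ n → proj m x = 0
  one_mem : (1 : Ω) ∈ gr 0
  mul_mem : ∀ {m n : ℕ} {x y : Ω}, x ∈ gr m → y ∈ gr n → x * y ∈ gr (m + n)
  conj : Ω → Ω
  conj_conj : ∀ x, conj (conj x) = x
  conj_add : ∀ x y, conj (x + y) = conj x + conj y
  conj_smul : ∀ (c : ℂ) (x : Ω), conj (c • x) = (starRingEnd ℂ) c • conj x
  conj_one : conj 1 = 1
  conj_mul : ∀ {m n : ℕ} {x y : Ω}, x ∈ gr m → y ∈ gr n →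
    conj (x * y) = ((-1 : ℂ) ^ (m * n)) • (conj y * conj x)
  conj_mem : ∀ {n : ℕ} {x : Ω}, x ∈ gr n → conj x ∈ gr n

structure GDSA (Ω : Type) [Ring Ω] [Algebra ℂ Ω] extends GrStarAlg Ω where
  d : Ω →ₗ[ℂ] Ω
  d_mem : ∀ {n : ℕ} {x : Ω}, x ∈ gr n → d x ∈ gr (n + 1)
  d_sq : ∀ x : Ω, d (d x) = 0
  leibniz : ∀ {n : ℕ} {x : Ω}, x ∈ gr n → ∀ y : Ω,
    d (x * y) = d x * y + ((-1 : ℂ) ^ n) • (x * d y)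
  d_conj : ∀ x, d (conj x) = conj (d x)

variable (A : Type) [Ring A] [HopfAlgebra ℂ A]

def adA : A →ₗ[ℂ] A ⊗[ℂ] A :=
  (map LinearMap.id (LinearMap.mul' ℂ A)) ∘ₗ
    (TensorProduct.assoc ℂ A A A).toLinearMap ∘ₗ
    (map ((TensorProduct.comm ℂ A A).toLinearMap ∘ₗ
      (map (HopfAlgebra.antipode (R := ℂ)) LinearMap.id)) LinearMap.id) ∘ₗ
    (TensorProduct.assoc ℂ A A A).symm.toLinearMap ∘ₗ
    (map LinearMap.id (Coalgebra.comul (R := ℂ))) ∘ₗ (Coalgebra.comul (R := ℂ))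

/-- Differential calculus `Γ^∧` on the structure quantum group `G`, together with
its distinguished left-invariant part, the canonical map `π`, the right
`A`-module structure `∘`, the adjoint (right) coaction, and the extension `φ̂`
of the comultiplication. -/
structure GroupCalc (A : Type) [Ring A] [HopfAlgebra ℂ A] [StarRing A]
    (Gw : Type) [Ring Gw] [Algebra ℂ Gw] where
  S : GDSA Gw
  ι : A →ₐ[ℂ] Gw
  ι_inj : Function.Injective ι
  ι_mem : ∀ a, ι a ∈ S.gr 0
  gr0_eq : ∀ x ∈ S.gr 0, ∃ a, ι a = x
  ι_conj : ∀ a, S.conj (ι a) = ι (star a)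
  ιinv : Gw →ₗ[ℂ] A
  ιinv_ι : ∀ a, ιinv (ι a) = a
  ι_ιinv : ∀ x, ι (ιinv x) = S.proj 0 x
  generated : ∀ W : Submodule ℂ Gw, (∀ a, ι a ∈ W) →
    (∀ x y, x ∈ W → y ∈ W → x * y ∈ W) → (∀ x ∈ W, S.d x ∈ W) → ∀ x, x ∈ W
  Inv : ℕ → Submodule ℂ Gw
  Inv_le : ∀ n, Inv n ≤ S.gr n
  Inv_one : (1 : Gw) ∈ Inv 0
  Inv_zero : ∀ x ∈ Inv 0, ∃ c : ℂ, x = c • (1 : Gw)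
  Inv_mul : ∀ {m n : ℕ} {x y : Gw}, x ∈ Inv m → y ∈ Inv n → x * y ∈ Inv (m + n)
  Inv_d : ∀ {n : ℕ} {x : Gw}, x ∈ Inv n → S.d x ∈ Inv (n + 1)
  Inv_conj : ∀ {n : ℕ} {x : Gw}, x ∈ Inv n → S.conj x ∈ Inv n
  InvT : Submodule ℂ Gw
  Inv_le_InvT : ∀ n, Inv n ≤ InvT
  InvT_eq : InvT = ⨆ n, Inv n
  π : A →ₗ[ℂ] Gw
  π_eq : π = (LinearMap.mul' ℂ Gw) ∘ₗ
      (map (ι.toLinearMap ∘ₗ HopfAlgebra.antipode (R := ℂ)) (S.d ∘ₗ ι.toLinearMap)) ∘ₗ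
        (Coalgebra.comul (R := ℂ))
  π_mem : ∀ a, π a ∈ Inv 1
  π_surj : ∀ x ∈ Inv 1, ∃ a, π a = x
  π_conj : ∀ a, S.conj (π a) = - π (star (HopfAlgebra.antipode (R := ℂ) a))
  Rid : Submodule ℂ A
  Rid_counit : ∀ a ∈ Rid, Coalgebra.counit (R := ℂ) a = (0 : ℂ)
  Rid_mul : ∀ a ∈ Rid, ∀ b : A, a * b ∈ Rid
  π_ker : ∀ a : A, π a = 0 ↔ a ∈ (Submodule.span ℂ {(1 : A)} ⊔ Rid)
  circ : Gw →ₗ[ℂ] A →ₗ[ℂ] Gw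
  circ_eq : ∀ (θ : Gw) (a : A), circ θ a =
    (LinearMap.mul' ℂ Gw) ((map (ι.toLinearMap ∘ₗ HopfAlgebra.antipode (R := ℂ))
      ((LinearMap.mulLeft ℂ θ) ∘ₗ ι.toLinearMap)) (Coalgebra.comul (R := ℂ) a))
  circ_Inv : ∀ {n : ℕ} {θ : Gw}, θ ∈ Inv n → ∀ a, circ θ a ∈ Inv n
  adj : Gw →ₗ[ℂ] Gw ⊗[ℂ] A
  adj_ι : ∀ a, adj (ι a) = (map ι.toLinearMap LinearMap.id) (Coalgebra.comul (R := ℂ) a)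
  adj_mul : ∀ x y, adj (x * y) = adj x * adj y
  adj_d : ∀ x, adj (S.d x) = (map S.d LinearMap.id) (adj x)
  adj_counit : ∀ x, (TensorProduct.rid ℂ Gw)
    ((map LinearMap.id (Coalgebra.counit (R := ℂ))) (adj x)) = x
  adj_π : ∀ a, adj (π a) = (map π LinearMap.id) (adA A a)
  adj_Inv : ∀ {n : ℕ} {θ : Gw}, θ ∈ Inv n →
    adj θ ∈ LinearMap.range (map (Inv n).subtype (LinearMap.id (M := A)))
  pInv : Gw →ₗ[ℂ] Gw
  pInv_mem : ∀ {n : ℕ} {x : Gw}, x ∈ S.gr n → pInv x ∈ Inv n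
  pInv_id : ∀ x ∈ InvT, pInv x = x
  pInv_mod : ∀ (a : A) (x : Gw), pInv (ι a * x) = (Coalgebra.counit (R := ℂ) a) • pInv x
  πInv : A →ₗ[ℂ] ↥(Inv 1)
  πInv_spec : ∀ a, ((πInv a : Gw)) = π a
  circInv : ↥(Inv 1) →ₗ[ℂ] A →ₗ[ℂ] ↥(Inv 1)
  circInv_spec : ∀ (θ : ↥(Inv 1)) (a : A), ((circInv θ a : Gw)) = circ (θ : Gw) a
  adjInv : ↥(Inv 1) →ₗ[ℂ] ↥(Inv 1) ⊗[ℂ] A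
  adjInv_spec : ∀ θ, (map (Inv 1).subtype LinearMap.id) (adjInv θ) = adj (θ : Gw)
  conjInv : ↥(Inv 1) → ↥(Inv 1)
  conjInv_spec : ∀ θ, ((conjInv θ : Gw)) = S.conj (θ : Gw)
  conjI2 : ↥(Inv 1) ⊗[ℂ] ↥(Inv 1) → ↥(Inv 1) ⊗[ℂ] ↥(Inv 1)
  conjI2_add : ∀ x y, conjI2 (x + y) = conjI2 x + conjI2 y
  conjI2_spec : ∀ x y : ↥(Inv 1), conjI2 (x ⊗ₜ y) = conjInv y ⊗ₜ conjInv x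
  tmulG : (Gw ⊗[ℂ] Gw) →ₗ[ℂ] (Gw ⊗[ℂ] Gw) →ₗ[ℂ] (Gw ⊗[ℂ] Gw)
  tmulG_spec : ∀ {m n : ℕ} (w u θ η : Gw), θ ∈ S.gr m → u ∈ S.gr n →
    tmulG (w ⊗ₜ θ) (u ⊗ₜ η) = ((-1 : ℂ) ^ (m * n)) • ((w * u) ⊗ₜ (θ * η))
  tdG : Gw ⊗[ℂ] Gw →ₗ[ℂ] Gw ⊗[ℂ] Gw
  tdG_spec : ∀ {n : ℕ} (w θ : Gw), w ∈ S.gr n →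
    tdG (w ⊗ₜ θ) = S.d w ⊗ₜ θ + ((-1 : ℂ) ^ n) • (w ⊗ₜ S.d θ)
  hatφ : Gw →ₗ[ℂ] Gw ⊗[ℂ] Gw
  hatφ_ι : ∀ a, hatφ (ι a) = (map ι.toLinearMap ι.toLinearMap) (Coalgebra.comul (R := ℂ) a)
  hatφ_mul : ∀ x y, hatφ (x * y) = tmulG (hatφ x) (hatφ y)
  hatφ_d : ∀ x, hatφ (S.d x) = tdG (hatφ x)

/-- A quantum principal `G`-bundle `P = (B, i, F)` over the quantum space `M`
represented by the *-algebra `V`. -/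
structure QPB (A : Type) [Ring A] [HopfAlgebra ℂ A] [StarRing A]
    (V B : Type) [Ring V] [Algebra ℂ V] [StarRing V] [Ring B] [Algebra ℂ B] [StarRing B] where
  i : V →ₐ[ℂ] B
  i_star : ∀ v, i (star v) = star (i v)
  i_inj : Function.Injective i
  F : B →ₐ[ℂ] B ⊗[ℂ] A
  F_star : ∀ (b : B) (s : Finset ℕ) (bk : ℕ → B) (ck : ℕ → A),
    F b = ∑ k ∈ s, bk k ⊗ₜ ck k → F (star b) = ∑ k ∈ s, star (bk k) ⊗ₜ star (ck k)
  coassoc_F : ∀ b, (TensorProduct.assoc ℂ B A A)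
    ((map F.toLinearMap LinearMap.id) (F b)) = (map LinearMap.id (Coalgebra.comul (R := ℂ))) (F b)
  free : Function.Surjective ((LinearMap.mul' ℂ (B ⊗[ℂ] A)) ∘ₗ
    (map (Algebra.TensorProduct.includeLeft : B →ₐ[ℂ] B ⊗[ℂ] A).toLinearMap F.toLinearMap))

/-- A differential calculus `Ω(P)` on a quantum principal bundle: a graded
differential *-algebra with `Ω⁰(P) = B`, generated by `B` (property *diff1*),
such that `F` extends to a homomorphism `F̂ : Ω(P) → Ω(P) ⊗̂ Γ^∧` of
graded-differential algebras (property *diff2*). -/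
structure Calc (A : Type) [Ring A] [HopfAlgebra ℂ A] [StarRing A]
    (Gw : Type) [Ring Gw] [Algebra ℂ Gw]
    (V B : Type) [Ring V] [Algebra ℂ V] [StarRing V] [Ring B] [Algebra ℂ B] [StarRing B]
    (Ω : Type) [Ring Ω] [Algebra ℂ Ω]
    (C : GroupCalc A Gw) (P : QPB A V B) where
  S : GDSA Ω
  ιB : B →ₐ[ℂ] Ω
  ιB_inj : Function.Injective ιB
  ιB_mem : ∀ b, ιB b ∈ S.gr 0
  gr0_eq : ∀ x ∈ S.gr 0, ∃ b, ιB b = x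
  ιB_conj : ∀ b, S.conj (ιB b) = ιB (star b)
  generated : ∀ W : Submodule ℂ Ω, (∀ b, ιB b ∈ W) →
    (∀ x y, x ∈ W → y ∈ W → x * y ∈ W) → (∀ x ∈ W, S.d x ∈ W) → ∀ x, x ∈ W
  tmul : (Ω ⊗[ℂ] Gw) →ₗ[ℂ] (Ω ⊗[ℂ] Gw) →ₗ[ℂ] (Ω ⊗[ℂ] Gw)
  tmul_spec : ∀ {m n : ℕ} (w u : Ω) (θ η : Gw), θ ∈ C.S.gr m → u ∈ S.gr n →
    tmul (w ⊗ₜ θ) (u ⊗ₜ η) = ((-1 : ℂ) ^ (m * n)) • ((w * u) ⊗ₜ (θ * η))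
  td : (Ω ⊗[ℂ] Gw) →ₗ[ℂ] (Ω ⊗[ℂ] Gw)
  td_spec : ∀ {n : ℕ} (w : Ω) (θ : Gw), w ∈ S.gr n →
    td (w ⊗ₜ θ) = S.d w ⊗ₜ θ + ((-1 : ℂ) ^ n) • (w ⊗ₜ C.S.d θ)
  tconj : (Ω ⊗[ℂ] Gw) → (Ω ⊗[ℂ] Gw)
  tconj_add : ∀ x y, tconj (x + y) = tconj x + tconj y
  tconj_spec : ∀ (w : Ω) (θ : Gw), tconj (w ⊗ₜ θ) = S.conj w ⊗ₜ C.S.conj θ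
  Fh : Ω →ₗ[ℂ] Ω ⊗[ℂ] Gw
  Fh_one : Fh 1 = (1 : Ω) ⊗ₜ (1 : Gw)
  Fh_mul : ∀ x y, Fh (x * y) = tmul (Fh x) (Fh y)
  Fh_d : ∀ x, Fh (S.d x) = td (Fh x)
  Fh_grade : ∀ {n : ℕ} {x : Ω}, x ∈ S.gr n → ∀ i j : ℕ, i + j ≠ n →
    (map (S.proj i) (C.S.proj j)) (Fh x) = 0
  Fh_extends : ∀ b, Fh (ιB b) = (map ιB.toLinearMap C.ι.toLinearMap) (P.F b)

section Standalone

variable {A : Type} [Ring A] [HopfAlgebra ℂ A] [StarRing A]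
variable {Gw : Type} [Ring Gw] [Algebra ℂ Gw]
variable {Ω : Type} [Ring Ω] [Algebra ℂ Ω]
variable (C : GroupCalc A Gw)

/-- Multiplicativity of a connection: `ω π(a⁽¹⁾) ω π(a⁽²⁾) = 0` for all `a ∈ R`. -/
def IsMultiplicative (ω : ↥(C.Inv 1) →ₗ[ℂ] Ω) : Prop :=
  ∀ a ∈ C.Rid, LinearMap.mul' ℂ Ω
    ((map (ω ∘ₗ C.πInv) (ω ∘ₗ C.πInv)) (Coalgebra.comul (R := ℂ) a)) = 0

/-- The map `r_ω(a) = ω π(a⁽¹⁾) ω π(a⁽²⁾)` measuring the lack of multiplicativity. -/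
def rOmega (ω : ↥(C.Inv 1) →ₗ[ℂ] Ω) : A →ₗ[ℂ] Ω :=
  (LinearMap.mul' ℂ Ω) ∘ₗ (map (ω ∘ₗ C.πInv) (ω ∘ₗ C.πInv)) ∘ₗ (Coalgebra.comul (R := ℂ))

end Standalone

namespace Calc

variable {A : Type} [Ring A] [HopfAlgebra ℂ A] [StarRing A]
variable {Gw : Type} [Ring Gw] [Algebra ℂ Gw]
variable {V B : Type} [Ring V] [Algebra ℂ V] [StarRing V] [Ring B] [Algebra ℂ B] [StarRing B]
variable {Ω : Type} [Ring Ω] [Algebra ℂ Ω]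
variable {C : GroupCalc A Gw} {P : QPB A V B}
variable (O : Calc A Gw V B Ω C P)

/-- `F^∧ = (id ⊗ p₀)F̂`, with the degree-zero part identified with `A`. -/
def Fa : Ω →ₗ[ℂ] Ω ⊗[ℂ] A := (map LinearMap.id C.ιinv) ∘ₗ O.Fh

/-- The graded *-subalgebra `hor(P) = F̂⁻¹(Ω(P) ⊗ A)` of horizontal forms. -/
def horSub : Submodule ℂ Ω :=
  LinearMap.ker (O.Fh - (map LinearMap.id (C.S.proj 0)) ∘ₗ O.Fh)

/-- `Ω(M) = {w : F̂ w = w ⊗ 1}`, differential forms on the base. -/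
def OmegaM : Submodule ℂ Ω :=
  LinearMap.ker (O.Fh - (TensorProduct.mk ℂ Ω Gw).flip 1)

/-- The degree `k` part of the verticalization homomorphism `π_v`,
`π_v = (id ⊗ π_inv p_k) F̂` on `Ω^k(P)`. -/
def vertPart (k : ℕ) : Ω →ₗ[ℂ] Ω ⊗[ℂ] Gw :=
  (map LinearMap.id (C.pInv ∘ₗ C.S.proj k)) ∘ₗ O.Fh

/-- A connection: a hermitian first-order linear map `ω : Γ_inv → Ω¹(P)` with
`F̂ ω(θ) = (ω ⊗ id) ϖ(θ) + 1 ⊗ θ`. -/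
def IsConnection (ω : ↥(C.Inv 1) →ₗ[ℂ] Ω) : Prop :=
  (∀ θ, ω θ ∈ O.S.gr 1) ∧
  (∀ θ, ω (C.conjInv θ) = O.S.conj (ω θ)) ∧
  (∀ θ, O.Fh (ω θ) =
    (map LinearMap.id C.ι.toLinearMap) ((map ω LinearMap.id) (C.adjInv θ)) +
      (1 : Ω) ⊗ₜ ((θ : Gw)))

/-- Regularity: `ω(θ)φ = (-1)^{∂φ} Σ_k φ_k ω(θ ∘ c_k)` for horizontal `φ`. -/
def IsRegular (ω : ↥(C.Inv 1) →ₗ[ℂ] Ω) : Prop :=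
  ∀ (n : ℕ) (φ : Ω), φ ∈ O.horSub → φ ∈ O.S.gr n → ∀ θ : ↥(C.Inv 1),
    ω θ * φ = ((-1 : ℂ) ^ n) •
      (LinearMap.mul' ℂ Ω ((map LinearMap.id (ω ∘ₗ C.circInv θ)) (O.Fa φ)))

/-- The covariant derivative on horizontal forms of degree `n`:
`D_ω(φ) = dφ - (-1)^{∂φ} Σ_k φ_k ω π(c_k)`. -/
def Dcov (ω : ↥(C.Inv 1) →ₗ[ℂ] Ω) (n : ℕ) : Ω →ₗ[ℂ] Ω :=
  O.S.d - ((-1 : ℂ) ^ n) •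
    ((LinearMap.mul' ℂ Ω) ∘ₗ (map LinearMap.id (ω ∘ₗ C.πInv)) ∘ₗ O.Fa)

/-- A tensorial `k`-form: a linear map `Γ_inv → hor^k(P)` intertwining `ϖ` and `F^∧`. -/
def IsTensorial (k : ℕ) (f : ↥(C.Inv 1) →ₗ[ℂ] Ω) : Prop :=
  (∀ θ, f θ ∈ O.horSub ∧ f θ ∈ O.S.gr k) ∧
  (∀ θ, O.Fh (f θ) = (map LinearMap.id C.ι.toLinearMap) ((map f LinearMap.id) (C.adjInv θ)))

/-- The left ideal `T(P)` of `Ω(P)` generated by `r_ω(R)`. -/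
def TP (ω : ↥(C.Inv 1) →ₗ[ℂ] Ω) : Submodule ℂ Ω :=
  Submodule.span ℂ {x | ∃ w : Ω, ∃ a ∈ C.Rid, x = w * rOmega C ω a}

end Calc

section EmbDiff

variable {A : Type} [Ring A] [HopfAlgebra ℂ A] [StarRing A]
variable {Gw : Type} [Ring Gw] [Algebra ℂ Gw]
variable (C : GroupCalc A Gw)

/-- The coaction `ϖ ⊗ ϖ` (with multiplied `A`-legs) on `Γ_inv ⊗ Γ_inv`. -/
def adjInv2 : (↥(C.Inv 1) ⊗[ℂ] ↥(C.Inv 1)) →ₗ[ℂ] (↥(C.Inv 1) ⊗[ℂ] ↥(C.Inv 1)) ⊗[ℂ] A :=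
  (map LinearMap.id (LinearMap.mul' ℂ A)) ∘ₗ
    (tensorTensorTensorComm ℂ ↥(C.Inv 1) A ↥(C.Inv 1) A).toLinearMap ∘ₗ
    (map C.adjInv C.adjInv)

/-- An embedded differential `δ : Γ_inv → Γ_inv ⊗ Γ_inv`. -/
def IsEmbDiff (δ : ↥(C.Inv 1) →ₗ[ℂ] ↥(C.Inv 1) ⊗[ℂ] ↥(C.Inv 1)) : Prop :=
  (∀ θ, adjInv2 C (δ θ) = (map δ LinearMap.id) (C.adjInv θ)) ∧
  (∀ θ, (LinearMap.mul' ℂ Gw) ((map (C.Inv 1).subtype (C.Inv 1).subtype) (δ θ)) =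
    C.S.d (θ : Gw)) ∧
  (∀ θ, δ (C.conjInv θ) = - C.conjI2 (δ θ))

/-- The transposed commutator `c^⊤ = (id ⊗ π) ϖ`. -/
def cT : ↥(C.Inv 1) →ₗ[ℂ] ↥(C.Inv 1) ⊗[ℂ] ↥(C.Inv 1) :=
  (map LinearMap.id C.πInv) ∘ₗ C.adjInv

end EmbDiff

section Brackets

variable {A : Type} [Ring A] [HopfAlgebra ℂ A] [StarRing A]
variable {Gw : Type} [Ring Gw] [Algebra ℂ Gw]
variable {Ω : Type} [Ring Ω] [Algebra ℂ Ω]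
variable (C : GroupCalc A Gw)

/-- The bracket `⟨φ, η⟩ = m_Ω (φ ⊗ η) δ`. -/
def bra (δ : ↥(C.Inv 1) →ₗ[ℂ] ↥(C.Inv 1) ⊗[ℂ] ↥(C.Inv 1))
    (f g : ↥(C.Inv 1) →ₗ[ℂ] Ω) : ↥(C.Inv 1) →ₗ[ℂ] Ω :=
  (LinearMap.mul' ℂ Ω) ∘ₗ (map f g) ∘ₗ δ

/-- The bracket `[φ, η] = m_Ω (φ ⊗ η) c^⊤`. -/
def com (f g : ↥(C.Inv 1) →ₗ[ℂ] Ω) : ↥(C.Inv 1) →ₗ[ℂ] Ω :=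
  (LinearMap.mul' ℂ Ω) ∘ₗ (map f g) ∘ₗ cT C

/-- The curvature `R_ω = dω - ⟨ω, ω⟩` of a connection. -/
def Rcurv {V B : Type} [Ring V] [Algebra ℂ V] [StarRing V] [Ring B] [Algebra ℂ B] [StarRing B]
    {C' : GroupCalc A Gw} {P : QPB A V B} (O : Calc A Gw V B Ω C' P)
    (δ : ↥(C'.Inv 1) →ₗ[ℂ] ↥(C'.Inv 1) ⊗[ℂ] ↥(C'.Inv 1))
    (ω : ↥(C'.Inv 1) →ₗ[ℂ] Ω) : ↥(C'.Inv 1) →ₗ[ℂ] Ω :=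
  O.S.d ∘ₗ ω - bra C' δ ω ω

end Brackets


section Statement

variable {A : Type} [Ring A] [HopfAlgebra ℂ A] [StarRing A]
variable {Gw : Type} [Ring Gw] [Algebra ℂ Gw]
variable {V B : Type} [Ring V] [Algebra ℂ V] [StarRing V] [Ring B] [Algebra ℂ B] [StarRing B]
variable {Ω : Type} [Ring Ω] [Algebra ℂ Ω]
variable {C : GroupCalc A Gw} {P : QPB A V B}

/-- For every connection `ω` and tensorial form `φ ∈ τ(P)`,
`D_ω φ = dφ - (-1)^{∂φ} [φ, ω]`. -/
theorem statement11 (O : Calc A Gw V B Ω C P)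
    (ω : ↥(C.Inv 1) →ₗ[ℂ] Ω) (hω : O.IsConnection ω)
    (k : ℕ) (f : ↥(C.Inv 1) →ₗ[ℂ] Ω) (hf : O.IsTensorial k f) :
    (O.Dcov ω k) ∘ₗ f = O.S.d ∘ₗ f - ((-1 : ℂ) ^ k) • (com C f ω) := by
  ext θ
  have hι : C.ιinv ∘ₗ C.ι.toLinearMap = LinearMap.id := by
    ext a; simp [C.ιinv_ι]
  have key : O.Fa (f θ) = (TensorProduct.map f LinearMap.id) (C.adjInv θ) := by
    rw [Calc.Fa, LinearMap.comp_apply, hf.2 θ, ← LinearMap.comp_apply,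
      ← TensorProduct.map_comp, LinearMap.id_comp, hι, TensorProduct.map_id,
      LinearMap.id_apply]
  have hm : TensorProduct.map (LinearMap.id (M := Ω)) (ω ∘ₗ C.πInv) ∘ₗ
      TensorProduct.map f LinearMap.id
      = TensorProduct.map f ω ∘ₗ TensorProduct.map LinearMap.id C.πInv := by
    rw [← TensorProduct.map_comp, ← TensorProduct.map_comp]
    simp
  simp only [LinearMap.comp_apply, LinearMap.sub_apply, LinearMap.smul_apply,
    Calc.Dcov, com, cT, key]
  congr 1
  rw [← LinearMap.comp_apply (TensorProduct.map LinearMap.id (ω ∘ₗ C.πInv)),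
    hm, LinearMap.comp_apply]

end Statement

end
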